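/- Let p be a prime, L a number field, 𝔭 a prime of L above p which is unramified over p, and θ ∈ L a 𝔭-adic unit. Let r be the multiplicative order of θ modulo 𝔭. Then for every positive integer k with θ^k ≡ 1 (mod 𝔭), one has r ∣ k; moreover, if p > 2, then ν_p(k) = ν_𝔭(1 − θ^k) − ν_𝔭(1 − θ^r). -/

import Mathlib

open NumberField

lemma aux_pow_expand {R : Type*} [CommRing R] (y : R) :
    ∀ n : ℕ, ∃ c : R, y ^ n = 1 + n * (y - 1) + (y - 1) ^ 2 * c := by
  intro n
  induction n with
  | zero => exact ⟨0, by ring⟩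
  | succ n ih =>
    obtain ⟨c, hc⟩ := ih
    refine ⟨(n : R) + c + (y - 1) * c, ?_⟩
    rw [pow_succ, hc]
    push_cast
    ring

lemma aux_sum_expand {R : Type*} [CommRing R] (y : R) :
    ∀ n : ℕ, ∃ c : R, (∑ i ∈ Finset.range n, y ^ i) =
      (n : R) + (y - 1) * ((∑ i ∈ Finset.range n, i : ℕ) : R) + (y - 1) ^ 2 * c := by
  intro n
  induction n with
  | zero => exact ⟨0, by simp⟩
  | succ n ih =>
    obtain ⟨c, hc⟩ := ih
    obtain ⟨c', hc'⟩ := aux_pow_expand y n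
    refine ⟨c + c', ?_⟩
    rw [Finset.sum_range_succ, Finset.sum_range_succ, hc, hc']
    push_cast
    ring

set_option maxHeartbeats 1000000 in
set_option synthInstance.maxHeartbeats 200000 in
/-- Lifting-the-exponent for the order of `θ` modulo an unramified prime `𝔭` above `p`:
`r ∣ k`, and for `p > 2`, `ν_𝔭(1 − θ^k) = ν_p(k) + ν_𝔭(1 − θ^r)`. -/
theorem order_divides_and_lte (L : Type*) [Field L] [NumberField L]
    (p : ℕ) (hp : p.Prime) (𝔭 : Ideal (𝓞 L)) (hprime : 𝔭.IsPrime) (hbot : 𝔭 ≠ ⊥)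
    (habove : ((p : ℕ) : 𝓞 L) ∈ 𝔭)
    (hunram : Ideal.ramificationIdx' (Ideal.span {(p : ℤ)}) 𝔭 = 1)
    (θ : 𝓞 L) (hθ : θ ∉ 𝔭)
    (r : ℕ) (hr : 0 < r) (hθr : θ ^ r - 1 ∈ 𝔭)
    (hrmin : ∀ s : ℕ, 0 < s → s < r → θ ^ s - 1 ∉ 𝔭)
    (k : ℕ) (hk : 0 < k) (hθk : θ ^ k - 1 ∈ 𝔭) :
    r ∣ k ∧
      (2 < p →
        emultiplicity 𝔭 (Ideal.span {1 - θ ^ k}) =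
          (padicValNat p k : ℕ∞) + emultiplicity 𝔭 (Ideal.span {1 - θ ^ r})) := by
  classical
  haveI := hprime
  haveI : Fact p.Prime := ⟨hp⟩
  set v : 𝓞 L → ℕ∞ := fun a => emultiplicity 𝔭 (Ideal.span {a}) with hv
  have hPrime : Prime 𝔭 := Ideal.prime_of_isPrime hbot hprime
  have hv_mul : ∀ a b : 𝓞 L, v (a * b) = v a + v b := by
    intro a b
    simp only [hv, ← Ideal.span_singleton_mul_span_singleton]
    exact emultiplicity_mul hPrime
  have hdvd : ∀ (n : ℕ) (a : 𝓞 L), 𝔭 ^ n ∣ Ideal.span {a} ↔ a ∈ 𝔭 ^ n := by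
    intro n a
    rw [Ideal.dvd_iff_le, Ideal.span_singleton_le_iff_mem]
  have hv_zero : ∀ a : 𝓞 L, a ∉ 𝔭 → v a = 0 := by
    intro a ha
    rw [hv]
    simp only []
    rw [emultiplicity_eq_zero, Ideal.dvd_span_singleton]
    exact ha
  have hv_one_le : ∀ a : 𝓞 L, a ∈ 𝔭 → 1 ≤ v a := by
    intro a ha
    exact le_emultiplicity_of_pow_dvd (by rw [pow_one, Ideal.dvd_span_singleton]; exact ha)
  have hv_eq_one : ∀ a : 𝓞 L, a ∈ 𝔭 → a ∉ 𝔭 ^ 2 → v a = 1 := by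
    intro a ha ha2
    have h1 := hv_one_le a ha
    have h2 : v a < ((2 : ℕ) : ℕ∞) := by
      rw [hv]
      exact emultiplicity_lt_iff_not_dvd.mpr (fun h => ha2 ((hdvd 2 a).mp h))
    have hne : v a ≠ ⊤ := ne_top_of_lt h2
    lift v a to ℕ using hne with m hm
    have h1' : 1 ≤ m := by exact_mod_cast h1
    have h2' : m < 2 := by exact_mod_cast h2
    have : m = 1 := by omega
    exact_mod_cast congrArg (Nat.cast : ℕ → ℕ∞) this
  have hp0 : ((p : ℕ) : 𝓞 L) ≠ 0 := by
    exact_mod_cast Nat.cast_ne_zero.mpr hp.ne_zero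
  have hmap : Ideal.map (algebraMap ℤ (𝓞 L)) (Ideal.span {(p : ℤ)}) =
      Ideal.span {((p : ℕ) : 𝓞 L)} := by
    rw [Ideal.map_span]
    simp
  have hv_p : v ((p : ℕ) : 𝓞 L) = 1 := by
    rw [hv]
    simp only []
    rw [UniqueFactorizationMonoid.emultiplicity_eq_count_normalizedFactors hPrime.irreducible
      (by rwa [Ne, Submodule.zero_eq_bot, Ideal.span_singleton_eq_bot]), normalize_eq]
    rw [← hmap, ← Ideal.IsDedekindDomain.ramificationIdx'_eq_normalizedFactors_count
      (by rw [hmap, Ne, Ideal.span_singleton_eq_bot]; exact hp0) hprime hbot, hunram]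
    rfl
  -- natural numbers in 𝔭
  have hnat_mem : ∀ n : ℕ, (n : 𝓞 L) ∈ 𝔭 ↔ p ∣ n := by
    intro n
    constructor
    · intro hn
      by_contra hnd
      have hcop : Nat.Coprime p n := (Nat.Prime.coprime_iff_not_dvd hp).mpr hnd
      have hic : IsCoprime (p : ℤ) (n : ℤ) := by
        rw [Int.isCoprime_iff_gcd_eq_one, Int.gcd_natCast_natCast]
        exact hcop
      obtain ⟨a, b, hab⟩ := hic
      have hone : (1 : 𝓞 L) ∈ 𝔭 := by
        have h := congrArg (fun z : ℤ => (z : 𝓞 L)) hab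
        push_cast at h
        rw [← h]
        exact Ideal.add_mem _ (Ideal.mul_mem_left _ _ habove) (Ideal.mul_mem_left _ _ hn)
      exact hprime.ne_top ((Ideal.eq_top_iff_one _).mpr hone)
    · rintro ⟨m, rfl⟩
      push_cast
      exact Ideal.mul_mem_right _ _ habove
  -- geometric divisibility
  have G : ∀ (y : 𝓞 L) (n : ℕ), y - 1 ∈ 𝔭 → y ^ n - 1 ∈ 𝔭 := by
    intro y n h
    rw [← geom_sum_mul y n]
    exact Ideal.mul_mem_left _ _ h
  -- Part 1 : r ∣ k
  have hdvd_rk : r ∣ k := by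
    have h2 : (θ ^ r) ^ (k / r) - 1 ∈ 𝔭 := G _ _ hθr
    have hk' : θ ^ k = θ ^ (k % r) * (θ ^ r) ^ (k / r) := by
      rw [← pow_mul, ← pow_add]
      congr 1
      exact (Nat.mod_add_div k r).symm
    have h1 : θ ^ (k % r) - 1 ∈ 𝔭 := by
      have heq : θ ^ (k % r) - 1 =
          (θ ^ k - 1) - θ ^ (k % r) * ((θ ^ r) ^ (k / r) - 1) := by
        rw [hk']; ring
      rw [heq]
      exact Ideal.sub_mem _ hθk (Ideal.mul_mem_left _ _ h2)
    by_contra hnd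
    have hmod : 0 < k % r := Nat.pos_of_ne_zero fun h => hnd (Nat.dvd_of_mod_eq_zero h)
    exact hrmin _ hmod (Nat.mod_lt _ hr) h1
  refine ⟨hdvd_rk, fun hp2 => ?_⟩
  -- p does not divide r
  have hpr : ¬ p ∣ r := by
    rintro ⟨s, hs⟩
    have hs0 : 0 < s := by
      rcases Nat.eq_zero_or_pos s with h | h
      · rw [h, mul_zero] at hs; omega
      · exact h
    have hslt : s < r := by
      have := hp.two_le
      calc s = 1 * s := (one_mul s).symm
        _ < p * s := (Nat.mul_lt_mul_right hs0).mpr (by omega)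
        _ = r := hs.symm
    haveI : CharP (𝓞 L ⧸ 𝔭) p := ⟨fun n => by
      rw [← map_natCast (Ideal.Quotient.mk 𝔭), Ideal.Quotient.eq_zero_iff_mem, hnat_mem]⟩
    have hmk : Ideal.Quotient.mk 𝔭 (θ ^ r) = 1 := by
      have := Ideal.Quotient.eq_zero_iff_mem.mpr hθr
      rw [map_sub, map_one, sub_eq_zero] at this
      exact this
    have hz : (Ideal.Quotient.mk 𝔭 (θ ^ s) - 1) ^ p = 0 := by
      rw [sub_pow_char, one_pow, ← map_pow, ← pow_mul, mul_comm s p, ← hs, hmk, sub_self]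
    have h0 : Ideal.Quotient.mk 𝔭 (θ ^ s) - 1 = 0 :=
      pow_eq_zero_iff hp.ne_zero |>.mp hz
    have : θ ^ s - 1 ∈ 𝔭 := by
      rw [← Ideal.Quotient.eq_zero_iff_mem, map_sub, map_one, h0]
    exact hrmin s hs0 hslt this
  -- p not in 𝔭^2
  have hp_not_sq : ((p : ℕ) : 𝓞 L) ∉ 𝔭 ^ 2 := by
    intro h
    have h2 : ((2 : ℕ) : ℕ∞) ≤ v ((p : ℕ) : 𝓞 L) :=
      le_emultiplicity_of_pow_dvd ((hdvd 2 _).mpr h)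
    rw [hv_p] at h2
    norm_num at h2
  -- p divides the sum 0 + 1 + ... + (p-1)
  have hM : p ∣ ∑ i ∈ Finset.range p, i := by
    have h2 : (∑ i ∈ Finset.range p, i) * 2 = p * (p - 1) := Finset.sum_range_id_mul_two p
    have hdd : p ∣ (∑ i ∈ Finset.range p, i) * 2 := ⟨p - 1, h2⟩
    rcases (Nat.Prime.dvd_mul hp).mp hdd with h | h
    · exact h
    · exact absurd (Nat.le_of_dvd two_pos h) (by omega)
  -- key LTE step
  have K : ∀ y : 𝓞 L, y - 1 ∈ 𝔭 → v (1 - y ^ p) = v (1 - y) + 1 := by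
    intro y hy
    obtain ⟨c, hc⟩ := aux_sum_expand y p
    set S := ∑ i ∈ Finset.range p, y ^ i with hS
    have hfac : 1 - y ^ p = (1 - y) * S := by
      have h := geom_sum_mul y p
      rw [← hS] at h
      linear_combination h
    have hSsub : S - ((p : ℕ) : 𝓞 L) ∈ 𝔭 ^ 2 := by
      have h1 : (y - 1) * ((∑ i ∈ Finset.range p, i : ℕ) : 𝓞 L) ∈ 𝔭 ^ 2 := by
        rw [pow_two]
        exact Ideal.mul_mem_mul hy ((hnat_mem _).mpr hM)
      have h2 : (y - 1) ^ 2 * c ∈ 𝔭 ^ 2 :=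
        Ideal.mul_mem_right _ _ (Ideal.pow_mem_pow hy 2)
      have heq : S - ((p : ℕ) : 𝓞 L) =
          (y - 1) * ((∑ i ∈ Finset.range p, i : ℕ) : 𝓞 L) + (y - 1) ^ 2 * c := by
        rw [hc]; ring
      rw [heq]
      exact Ideal.add_mem _ h1 h2
    have hSmem : S ∈ 𝔭 := by
      have heq : S = (S - ((p : ℕ) : 𝓞 L)) + ((p : ℕ) : 𝓞 L) := by ring
      rw [heq]
      exact Ideal.add_mem _ (Ideal.pow_le_self two_ne_zero hSsub) habove
    have hSnot : S ∉ 𝔭 ^ 2 := by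
      intro h
      apply hp_not_sq
      have heq : ((p : ℕ) : 𝓞 L) = S - (S - ((p : ℕ) : 𝓞 L)) := by ring
      rw [heq]
      exact Ideal.sub_mem _ h hSsub
    rw [hfac, hv_mul, hv_eq_one S hSmem hSnot]
  -- main induction
  have H : ∀ m : ℕ, 0 < m →
      v (1 - (θ ^ r) ^ m) = (padicValNat p m : ℕ∞) + v (1 - θ ^ r) := by
    intro m
    induction m using Nat.strong_induction_on with
    | _ m ih =>
      intro hm
      by_cases hpm : p ∣ m
      · obtain ⟨n, rfl⟩ := hpm
        have hn : 0 < n := Nat.pos_of_ne_zero (by rintro rfl; simp at hm)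
        have hxn : (θ ^ r) ^ n - 1 ∈ 𝔭 := G _ _ hθr
        have hlt : n < p * n := by
          have := hp.two_le
          calc n = 1 * n := (one_mul n).symm
            _ < p * n := (Nat.mul_lt_mul_right hn).mpr (by omega)
        have hre : (θ ^ r) ^ (p * n) = ((θ ^ r) ^ n) ^ p := by
          rw [← pow_mul, ← pow_mul, ← pow_mul]
          congr 1
          ring
        rw [hre, K _ hxn, ih n hlt hn]
        have hval : padicValNat p (p * n) = padicValNat p n + 1 := by
          rw [padicValNat.mul hp.ne_zero hn.ne', padicValNat_self]
          omega
        rw [hval]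
        push_cast
        ring
      · rw [padicValNat.eq_zero_of_not_dvd hpm]
        set S := ∑ i ∈ Finset.range m, (θ ^ r) ^ i with hS
        have hfac : 1 - (θ ^ r) ^ m = (1 - θ ^ r) * S := by
          have h := geom_sum_mul (θ ^ r) m
          rw [← hS] at h
          linear_combination h
        have hSnot : S ∉ 𝔭 := by
          intro hmem
          have hsub : S - ((m : ℕ) : 𝓞 L) ∈ 𝔭 := by
            have heq : S - ((m : ℕ) : 𝓞 L) = ∑ i ∈ Finset.range m, ((θ ^ r) ^ i - 1) := by
              rw [Finset.sum_sub_distrib]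
              simp [hS]
            rw [heq]
            exact Ideal.sum_mem _ fun i _ => G _ _ hθr
          have hmm : ((m : ℕ) : 𝓞 L) ∈ 𝔭 := by
            have heq : ((m : ℕ) : 𝓞 L) = S - (S - ((m : ℕ) : 𝓞 L)) := by ring
            rw [heq]
            exact Ideal.sub_mem _ hmem hsub
          exact hpm ((hnat_mem m).mp hmm)
        rw [hfac, hv_mul, hv_zero S hSnot, add_zero, Nat.cast_zero, zero_add]
  -- assemble
  obtain ⟨q, hq⟩ := hdvd_rk
  have hq0 : 0 < q := by
    rcases Nat.eq_zero_or_pos q with h | h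
    · rw [h, mul_zero] at hq; omega
    · exact h
  have hmain := H q hq0
  rw [← pow_mul, ← hq] at hmain
  have hvk : padicValNat p k = padicValNat p q := by
    rw [hq, padicValNat.mul hr.ne' hq0.ne', padicValNat.eq_zero_of_not_dvd hpr, zero_add]
  rw [hvk]
  exact hmain
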